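/- arXiv:2012.07936 — 3 statements merged into one kernel-verified Lean document; each statement's English description precedes it below -/
import Mathlib

section
/- Pigeonhole robustness of AlgR: Let S_0 ⊆ S_1 ⊆ ... ⊆ S_r ⊆ V be an increasing chain of sets with the property that for every t ∈ {1,...,r}, every X' ⊆ S_{t−1} with |X'| ≤ r, and every i ∈ [m]: f_i(S_t \ X') ≥ 1 − α. Suppose moreover S_0 satisfies f_i(S_0) ≥ 1 − α for all i. Then for every X ⊆ V with |X| = r and every i ∈ [m], f_i(S_r \ X) ≥ 1 − α, i.e., S_r is (r,α)-robust. -/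
/-- pigeonhole robustness of AlgR. -/
theorem stmt_4 {α : Type*} [Fintype α] [DecidableEq α] {m : ℕ}
    (f : Fin m → Finset α → ℝ)
    (hmono : ∀ i, ∀ A B : Finset α, A ⊆ B → f i A ≤ f i B)
    (α' : ℝ) (hα : 0 ≤ α' ∧ α' ≤ 1)
    (r : ℕ) (V : Finset α) (S : ℕ → Finset α)
    (hchain : ∀ t, t ≤ r → ∀ s, s ≤ t → S s ⊆ S t)
    (hSV : S r ⊆ V)
    (hstep : ∀ t, 1 ≤ t → t ≤ r → ∀ X' : Finset α, X' ⊆ S (t - 1) →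
      X'.card ≤ r → ∀ i : Fin m, 1 - α' ≤ f i (S t \ X'))
    (hS0 : ∀ i : Fin m, 1 - α' ≤ f i (S 0)) :
    ∀ X : Finset α, X ⊆ V → X.card = r → ∀ i : Fin m,
      1 - α' ≤ f i (S r \ X) := by
  intro X hXV hXcard i
  by_cases h0 : X ∩ S 0 = ∅
  · have hsub : S 0 ⊆ S r \ X := by
      intro x hx
      rw [Finset.mem_sdiff]
      refine ⟨hchain r le_rfl 0 (Nat.zero_le r) hx, fun hxX => ?_⟩
      have : x ∈ X ∩ S 0 := Finset.mem_inter.mpr ⟨hxX, hx⟩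
      simp [h0] at this
    exact le_trans (hS0 i) (hmono i _ _ hsub)
  · have key : ∃ t, 1 ≤ t ∧ t ≤ r ∧ (X ∩ S t) ⊆ X ∩ S (t - 1) := by
      by_contra hcon
      push_neg at hcon
      have hstrict : ∀ t, 1 ≤ t → t ≤ r →
          (X ∩ S (t - 1)).card < (X ∩ S t).card := by
        intro t h1 h2
        have hsub : X ∩ S (t - 1) ⊆ X ∩ S t :=
          Finset.inter_subset_inter_left (hchain t h2 (t - 1) (Nat.sub_le t 1))
        refine Finset.card_lt_card (Finset.ssubset_iff_subset_ne.mpr ⟨hsub, fun he => ?_⟩)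
        exact hcon t h1 h2 (he ▸ Finset.Subset.refl _)
      have hge : ∀ t, t ≤ r → t + 1 ≤ (X ∩ S t).card := by
        intro t
        induction t with
        | zero =>
          intro _
          exact Nat.one_le_iff_ne_zero.mpr fun h => h0 (Finset.card_eq_zero.mp h)
        | succ n ih =>
          intro h
          have h1 := hstrict (n + 1) (by omega) h
          have h2 := ih (by omega)
          simp only [Nat.add_sub_cancel] at h1
          omega
      have hle : (X ∩ S r).card ≤ r := by
        calc (X ∩ S r).card ≤ X.card := Finset.card_le_card Finset.inter_subset_left
        _ = r := hXcard
      have := hge r le_rfl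
      omega
    obtain ⟨t, h1, h2, hsub⟩ := key
    have hX' : X ∩ S (t - 1) ⊆ S (t - 1) := Finset.inter_subset_right
    have hcard : (X ∩ S (t - 1)).card ≤ r := by
      calc (X ∩ S (t - 1)).card ≤ X.card := Finset.card_le_card Finset.inter_subset_left
      _ = r := hXcard
    have hstep' := hstep t h1 h2 (X ∩ S (t - 1)) hX' hcard i
    refine le_trans hstep' (hmono i _ _ ?_)
    intro x hx
    rw [Finset.mem_sdiff] at hx ⊢
    obtain ⟨hxt, hxn⟩ := hx
    refine ⟨hchain r le_rfl t h2 hxt, fun hxX => ?_⟩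
    exact hxn (hsub (Finset.mem_inter.mpr ⟨hxX, hxt⟩))
end

section
/- Correctness of the DisJoint heuristic: Let S_1, ..., S_{r+1} ⊆ V be pairwise disjoint sets such that f_i(S_j) ≥ 1 − α for all i ∈ [m] and j ∈ [r+1], and let S = S_1 ∪ ... ∪ S_{r+1}. Then for every X ⊆ V with |X| ≤ r and every i ∈ [m], f_i(S \ X) ≥ 1 − α. -/
/-- correctness of the DisJoint heuristic. -/
theorem stmt_5 {α : Type*} [Fintype α] [DecidableEq α] {m r : ℕ}
    (f : Fin m → Finset α → ℝ)
    (hmono : ∀ i, ∀ A B : Finset α, A ⊆ B → f i A ≤ f i B)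
    (α' : ℝ) (hα : 0 ≤ α' ∧ α' ≤ 1)
    (V : Finset α) (S : Fin (r + 1) → Finset α)
    (hSV : ∀ j, S j ⊆ V)
    (hdisj : ∀ j k : Fin (r + 1), j ≠ k → Disjoint (S j) (S k))
    (hsat : ∀ (i : Fin m) (j : Fin (r + 1)), 1 - α' ≤ f i (S j)) :
    ∀ X : Finset α, X ⊆ V → X.card ≤ r → ∀ i : Fin m,
      1 - α' ≤ f i ((Finset.univ.biUnion S) \ X) := by
  intro X hXV hXcard i
  -- pigeonhole: some j with S j ∩ X = ∅
  have hex : ∃ j : Fin (r + 1), Disjoint (S j) X := by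
    by_contra h
    push_neg at h
    have hne : ∀ j : Fin (r + 1), (S j ∩ X).Nonempty := by
      intro j
      rw [← Finset.not_disjoint_iff_nonempty_inter]
      exact h j
    have hsum : r + 1 ≤ ∑ j : Fin (r + 1), (S j ∩ X).card := by
      calc r + 1 = ∑ _j : Fin (r + 1), 1 := by simp
        _ ≤ ∑ j : Fin (r + 1), (S j ∩ X).card :=
          Finset.sum_le_sum (fun j _ => Finset.card_pos.mpr (hne j))
    have hdisj' : ∀ j ∈ (Finset.univ : Finset (Fin (r+1))),
        ∀ k ∈ (Finset.univ : Finset (Fin (r+1))), j ≠ k →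
        Disjoint (S j ∩ X) (S k ∩ X) := fun j _ k _ hjk =>
      ((hdisj j k hjk).mono Finset.inter_subset_left Finset.inter_subset_left)
    have hcard : ∑ j : Fin (r + 1), (S j ∩ X).card
        = (Finset.univ.biUnion (fun j => S j ∩ X)).card :=
      (Finset.card_biUnion hdisj').symm
    have hsub : Finset.univ.biUnion (fun j => S j ∩ X) ⊆ X := by
      intro x hx
      simp only [Finset.mem_biUnion, Finset.mem_inter] at hx
      obtain ⟨j, _, _, hxX⟩ := hx
      exact hxX
    have := Finset.card_le_card hsub
    omega
  obtain ⟨j, hj⟩ := hex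
  have hsub : S j ⊆ (Finset.univ.biUnion S) \ X := by
    intro x hx
    rw [Finset.mem_sdiff]
    exact ⟨Finset.mem_biUnion.mpr ⟨j, Finset.mem_univ j, hx⟩,
      fun hxX => (Finset.disjoint_left.mp hj hx) hxX⟩
  exact le_trans (hsat i j) (hmono i _ _ hsub)
end

section
/- Expected one-step decay for RandGr (Lemma 2 of the paper): Let f_1,...,f_m : 2^V → [0,1] be monotone submodular, let ℱ_t be a set of unsatisfied functions, and S_t a current set such that there exists O with |O| = k and f(S_t ∪ O) = 1 for all f ∈ ℱ_t. Let F be a uniformly random subset of ℱ_t of size |ℱ_t|/2, and let e_t maximize Σ_{f ∈ F} Δ_e f(S_t) over e ∈ V \ S_t; set S_{t+1} = S_t ∪ {e_t}. Then E[Σ_{f ∈ ℱ_t} (1 − f(S_{t+1}))] ≤ (1 − 1/(2k)) Σ_{f ∈ ℱ_t} (1 − f(S_t)). -/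
/-- expected one-step decay for RandGr (Lemma 2). The expectation
is the uniform average over all half-size subsets `F` of the unsatisfied
constraint set `ℱ`. -/
theorem stmt_10 {α : Type*} [Fintype α] [DecidableEq α] {m k c : ℕ}
    (hk : 0 < k)
    (f : Fin m → Finset α → ℝ)
    (hmono : ∀ i, ∀ A B : Finset α, A ⊆ B → f i A ≤ f i B)
    (hsub : ∀ i, ∀ (A B : Finset α) (e : α), A ⊆ B → e ∉ B →
      f i (insert e B) - f i B ≤ f i (insert e A) - f i A)
    (hrange : ∀ i, ∀ S : Finset α, 0 ≤ f i S ∧ f i S ≤ 1)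
    (ℱ : Finset (Fin m)) (hℱ : ℱ.card = 2 * c)
    (V S O : Finset α) (hS : S ⊆ V) (hO : O ⊆ V) (hOcard : O.card = k)
    (hcover : ∀ i ∈ ℱ, f i (S ∪ O) = 1)
    (e : Finset (Fin m) → α)
    (he : ∀ F ∈ Finset.powersetCard c ℱ, e F ∈ V \ S)
    (hmax : ∀ F ∈ Finset.powersetCard c ℱ, ∀ e' ∈ V \ S,
      ∑ i ∈ F, (f i (insert e' S) - f i S) ≤
        ∑ i ∈ F, (f i (insert (e F) S) - f i S)) :
    (1 / ((Finset.powersetCard c ℱ).card : ℝ)) *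
        ∑ F ∈ Finset.powersetCard c ℱ, ∑ i ∈ ℱ, (1 - f i (insert (e F) S)) ≤
      (1 - 1 / (2 * (k : ℝ))) * ∑ i ∈ ℱ, (1 - f i S) := by
  classical
  set P := Finset.powersetCard c ℱ with hP
  have hk' : (0:ℝ) < (k:ℝ) := by exact_mod_cast hk
  have hNpos : 0 < (P.card : ℝ) := by
    have : 0 < P.card := by
      rw [hP, Finset.card_powersetCard, hℱ]
      exact Nat.choose_pos (by omega)
    exact_mod_cast this
  -- telescoping submodularity bound
  have key : ∀ i, ∀ D : Finset α, Disjoint D S →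
      f i (S ∪ D) - f i S ≤ ∑ o ∈ D, (f i (insert o S) - f i S) := by
    intro i D
    induction D using Finset.induction_on with
    | empty => intro _; simp
    | insert a D' ha ih =>
      intro hdisj
      have hd := Finset.disjoint_insert_left.mp hdisj
      rw [Finset.sum_insert ha]
      have haSD : a ∉ S ∪ D' := by
        simp only [Finset.mem_union]
        push_neg
        exact ⟨hd.1, ha⟩
      have heq : S ∪ insert a D' = insert a (S ∪ D') := by
        ext x; simp [or_comm, or_left_comm]
      have h1 : f i (S ∪ insert a D') - f i (S ∪ D') ≤ f i (insert a S) - f i S := by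
        rw [heq]
        exact hsub i S (S ∪ D') a Finset.subset_union_left haSD
      have h2 := ih hd.2
      linarith
  -- nonnegativity of marginals with respect to the greedy element
  have hgain0 : ∀ F (i : Fin m), 0 ≤ f i (insert (e F) S) - f i S := by
    intro F i
    have := hmono i S (insert (e F) S) (Finset.subset_insert _ _)
    linarith
  -- Claim A: greedy gain bound
  have claimA : ∀ F ∈ P, (1/(k:ℝ)) * ∑ i ∈ F, (1 - f i S) ≤
      ∑ i ∈ F, (f i (insert (e F) S) - f i S) := by
    intro F hF
    have hFsub : F ⊆ ℱ := (Finset.mem_powersetCard.mp hF).1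
    set G := ∑ i ∈ F, (f i (insert (e F) S) - f i S) with hG
    have hG0 : 0 ≤ G := Finset.sum_nonneg fun i _ => hgain0 F i
    have hDcard : (O \ S).card ≤ k := by
      calc (O \ S).card ≤ O.card := Finset.card_le_card Finset.sdiff_subset
        _ = k := hOcard
    have hstep : ∑ i ∈ F, (1 - f i S) ≤
        ∑ o ∈ O \ S, ∑ i ∈ F, (f i (insert o S) - f i S) := by
      rw [Finset.sum_comm]
      apply Finset.sum_le_sum
      intro i hi
      have h1 : f i (S ∪ (O \ S)) = 1 := by
        rw [Finset.union_sdiff_self_eq_union]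
        exact hcover i (hFsub hi)
      have := key i (O \ S) Finset.sdiff_disjoint
      rw [h1] at this
      exact this
    have hmaxo : ∀ o ∈ O \ S, ∑ i ∈ F, (f i (insert o S) - f i S) ≤ G := by
      intro o ho
      apply hmax F hF
      rcases Finset.mem_sdiff.mp ho with ⟨ho1, ho2⟩
      exact Finset.mem_sdiff.mpr ⟨hO ho1, ho2⟩
    have hchain : ∑ i ∈ F, (1 - f i S) ≤ ((O \ S).card : ℝ) * G := by
      calc ∑ i ∈ F, (1 - f i S) ≤ _ := hstep
        _ ≤ ∑ _o ∈ O \ S, G := Finset.sum_le_sum hmaxo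
        _ = ((O \ S).card : ℝ) * G := by rw [Finset.sum_const, nsmul_eq_mul]
    have hkG : ((O \ S).card : ℝ) * G ≤ (k:ℝ) * G := by
      apply mul_le_mul_of_nonneg_right _ hG0
      exact_mod_cast hDcard
    rw [one_div, inv_mul_le_iff₀ hk']
    linarith
  -- pairing argument: ∑_F ∑_{i∈F} g = (N/2) ∑_{i∈ℱ} g
  have pair : 2 * ∑ F ∈ P, ∑ i ∈ F, (1 - f i S) =
      (P.card : ℝ) * ∑ i ∈ ℱ, (1 - f i S) := by
    have hcompl : ∀ F ∈ P, ℱ \ F ∈ P := by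
      intro F hF
      rcases Finset.mem_powersetCard.mp hF with ⟨hsub', hcard⟩
      refine Finset.mem_powersetCard.mpr ⟨Finset.sdiff_subset, ?_⟩
      rw [Finset.card_sdiff_of_subset hsub', hℱ, hcard]
      omega
    have h1 : ∑ F ∈ P, ∑ i ∈ ℱ \ F, (1 - f i S) = ∑ F ∈ P, ∑ i ∈ F, (1 - f i S) := by
      apply Finset.sum_nbij' (fun F => ℱ \ F) (fun F => ℱ \ F)
      · exact hcompl
      · exact hcompl
      · intro F hF
        exact Finset.sdiff_sdiff_eq_self (Finset.mem_powersetCard.mp hF).1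
      · intro F hF
        exact Finset.sdiff_sdiff_eq_self (Finset.mem_powersetCard.mp hF).1
      · intro _ _
        rfl
    have h2 : ∀ F ∈ P, ∑ i ∈ F, (1 - f i S) + ∑ i ∈ ℱ \ F, (1 - f i S) =
        ∑ i ∈ ℱ, (1 - f i S) := by
      intro F hF
      rw [add_comm]
      exact Finset.sum_sdiff (Finset.mem_powersetCard.mp hF).1
    calc 2 * ∑ F ∈ P, ∑ i ∈ F, (1 - f i S)
        = ∑ F ∈ P, ∑ i ∈ F, (1 - f i S) + ∑ F ∈ P, ∑ i ∈ ℱ \ F, (1 - f i S) := by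
          rw [h1]; ring
      _ = ∑ F ∈ P, (∑ i ∈ F, (1 - f i S) + ∑ i ∈ ℱ \ F, (1 - f i S)) := by
          rw [Finset.sum_add_distrib]
      _ = ∑ F ∈ P, ∑ i ∈ ℱ, (1 - f i S) := Finset.sum_congr rfl h2
      _ = (P.card : ℝ) * ∑ i ∈ ℱ, (1 - f i S) := by
          rw [Finset.sum_const, nsmul_eq_mul]
  -- per-F bound
  have perF : ∀ F ∈ P, ∑ i ∈ ℱ, (1 - f i (insert (e F) S)) ≤
      ∑ i ∈ ℱ, (1 - f i S) - (1/(k:ℝ)) * ∑ i ∈ F, (1 - f i S) := by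
    intro F hF
    have hFsub : F ⊆ ℱ := (Finset.mem_powersetCard.mp hF).1
    have hsplit : ∑ i ∈ ℱ, (1 - f i (insert (e F) S)) =
        ∑ i ∈ ℱ, (1 - f i S) - ∑ i ∈ ℱ, (f i (insert (e F) S) - f i S) := by
      rw [← Finset.sum_sub_distrib]
      apply Finset.sum_congr rfl
      intro i _; ring
    have hsubsum : ∑ i ∈ F, (f i (insert (e F) S) - f i S) ≤
        ∑ i ∈ ℱ, (f i (insert (e F) S) - f i S) :=
      Finset.sum_le_sum_of_subset_of_nonneg hFsub (fun i _ _ => hgain0 F i)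
    have := claimA F hF
    rw [hsplit]
    linarith
  -- assemble
  have hsumbd : ∑ F ∈ P, ∑ i ∈ ℱ, (1 - f i (insert (e F) S)) ≤
      (P.card : ℝ) * ∑ i ∈ ℱ, (1 - f i S)
        - (1/(k:ℝ)) * ((P.card : ℝ) / 2 * ∑ i ∈ ℱ, (1 - f i S)) := by
    calc ∑ F ∈ P, ∑ i ∈ ℱ, (1 - f i (insert (e F) S))
        ≤ ∑ F ∈ P, (∑ i ∈ ℱ, (1 - f i S) - (1/(k:ℝ)) * ∑ i ∈ F, (1 - f i S)) :=
          Finset.sum_le_sum perF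
      _ = (P.card : ℝ) * ∑ i ∈ ℱ, (1 - f i S)
            - (1/(k:ℝ)) * ∑ F ∈ P, ∑ i ∈ F, (1 - f i S) := by
          rw [Finset.sum_sub_distrib, Finset.sum_const, nsmul_eq_mul,
            ← Finset.mul_sum]
      _ = _ := by
          have : ∑ F ∈ P, ∑ i ∈ F, (1 - f i S) =
              (P.card : ℝ) / 2 * ∑ i ∈ ℱ, (1 - f i S) := by linarith [pair]
          rw [this]
  rw [one_div, inv_mul_le_iff₀ hNpos]
  calc ∑ F ∈ P, ∑ i ∈ ℱ, (1 - f i (insert (e F) S))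
      ≤ _ := hsumbd
    _ = (P.card : ℝ) * ((1 - 1 / (2 * (k:ℝ))) * ∑ i ∈ ℱ, (1 - f i S)) := by
        field_simp
end
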